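/- Let Σ × Ω be a finite sample space, π a probability mass function on Σ. For each σ ∈ Σ and ω ∈ Ω let |u_σ^ω⟩ be vectors in a Hilbert space with Σ_ω ‖|u_σ^ω⟩‖² = 1, set p_σ(ω) = ‖|u_σ^ω⟩‖² and p(σ,ω) = p_σ(ω)π(σ); for each (σ,ω) with p(σ,ω) > 0 let |v_σ^ω⟩ be nonzero vectors. Let û, v̂ be the normalized versions, and define a random variable D(σ,ω) = (1/2)‖|û_σ^ω⟩⟨û_σ^ω| − |v̂_σ^ω⟩⟨v̂_σ^ω|‖₁ when p(σ,ω) > 0 and D(σ,ω) = 0 otherwise. If Σ_σ π(σ) Σ_ω ‖|u_σ^ω⟩ − |v_σ^ω⟩‖² ≤ δ² for some δ > 0, then for any c > 0, Pr(D ≤ δ^c) ≥ 1 − 4δ^{2(1−c)}, where the probability is with respect to p. -/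

import Mathlib

open scoped ComplexOrder
open Classical

/-- The trace norm (Schatten 1-norm) of a square complex matrix:
`‖A‖₁ = tr √(AᴴA)`. -/
noncomputable def traceNorm {d : ℕ} (A : Matrix (Fin d) (Fin d) ℂ) : ℝ :=
  (((Matrix.posSemidef_conjTranspose_mul_self A).1.eigenvectorUnitary : Matrix (Fin d) (Fin d) ℂ) *
    Matrix.diagonal ((fun r : ℝ => (r : ℂ)) ∘ Real.sqrt ∘ (Matrix.posSemidef_conjTranspose_mul_self A).1.eigenvalues) *
    (star ((Matrix.posSemidef_conjTranspose_mul_self A).1.eigenvectorUnitary :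
      Matrix (Fin d) (Fin d) ℂ))).trace.re

/-- The rank-one operator `|u⟩⟨u|` associated to a vector `u`. -/
noncomputable def outer {d : ℕ} (u : EuclideanSpace ℂ (Fin d)) :
    Matrix (Fin d) (Fin d) ℂ :=
  Matrix.of fun i j => u i * (starRingEnd ℂ) (u j)

/-- The probability mass `p(σ,ω) = ‖u_σ^ω‖²·π(σ)`. -/
noncomputable def probMass {S Ω : Type*} {d : ℕ} (π : S → ℝ)
    (u : S → Ω → EuclideanSpace ℂ (Fin d)) (x : S × Ω) : ℝ :=
  ‖u x.1 x.2‖ ^ 2 * π x.1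

/-- The random variable `D(σ,ω)`: the trace distance between the normalized versions of
`u_σ^ω` and `v_σ^ω` when `p(σ,ω) > 0`, and `0` otherwise. -/
noncomputable def traceDistRV {S Ω : Type*} {d : ℕ} (π : S → ℝ)
    (u v : S → Ω → EuclideanSpace ℂ (Fin d)) (x : S × Ω) : ℝ :=
  if 0 < probMass π u x then
    (1 / 2) * traceNorm (outer (‖u x.1 x.2‖⁻¹ • u x.1 x.2) -
      outer (‖v x.1 x.2‖⁻¹ • v x.1 x.2))
  else 0

noncomputable def outerp {d : ℕ} (a b : EuclideanSpace ℂ (Fin d)) :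
    Matrix (Fin d) (Fin d) ℂ :=
  Matrix.of fun i j => a i * (starRingEnd ℂ) (b j)

lemma outer_eq_outerp {d : ℕ} (u : EuclideanSpace ℂ (Fin d)) : outer u = outerp u u := rfl

lemma outerp_mul {d : ℕ} (a b c e : EuclideanSpace ℂ (Fin d)) :
    outerp a b * outerp c e = (inner ℂ b c : ℂ) • outerp a e := by
  ext i j
  simp only [Matrix.mul_apply, outerp, Matrix.of_apply, Matrix.smul_apply, smul_eq_mul,
    PiLp.inner_apply, RCLike.inner_apply, Finset.sum_mul]
  exact Finset.sum_congr rfl fun k _ => by ring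

lemma outerp_trace {d : ℕ} (a b : EuclideanSpace ℂ (Fin d)) :
    (outerp a b).trace = (inner ℂ b a : ℂ) := by
  simp only [Matrix.trace, Matrix.diag, outerp, Matrix.of_apply, PiLp.inner_apply,
    RCLike.inner_apply]

open Matrix in
lemma outerp_conjTranspose {d : ℕ} (a b : EuclideanSpace ℂ (Fin d)) :
    (outerp a b)ᴴ = outerp b a := by
  ext i j
  simp only [Matrix.conjTranspose_apply, outerp, Matrix.of_apply, star_mul', RCLike.star_def,
    starRingEnd_self_apply]
  ring

lemma psd_eq_sqrt_of_sq_eq {d : ℕ} {C B : Matrix (Fin d) (Fin d) ℂ}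
    (hC : C.PosSemidef) (h : C ^ 2 = B) : C = cfc Real.sqrt B := by
  have hsa : IsSelfAdjoint C := hC.1
  rw [← h, ← cfc_pow_id (R := ℝ) C 2 hsa, ← cfc_comp Real.sqrt (fun x : ℝ => x ^ 2) C]
  conv_lhs => rw [← cfc_id' ℝ C]
  refine cfc_congr ?_
  rw [hC.1.spectrum_real_eq_range_eigenvalues]
  rintro _ ⟨i, rfl⟩
  exact (Real.sqrt_sq (hC.eigenvalues_nonneg i)).symm

open Matrix in
lemma traceNorm_eq_of_sq {d : ℕ} {A C : Matrix (Fin d) (Fin d) ℂ}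
    (hC : C.PosSemidef) (h : C ^ 2 = Aᴴ * A) : traceNorm A = C.trace.re := by
  have hH := (Matrix.posSemidef_conjTranspose_mul_self A).1
  have e : traceNorm A = (cfc Real.sqrt (Aᴴ * A)).trace.re := by
    rw [hH.cfc_eq, Matrix.IsHermitian.cfc, Unitary.conjStarAlgAut_apply]; rfl
  rw [e, ← psd_eq_sqrt_of_sq_eq hC h]

open Matrix in
lemma posSemidef_real_smul {d : ℕ} {A : Matrix (Fin d) (Fin d) ℂ}
    (hA : A.PosSemidef) {c : ℝ} (hc : 0 ≤ c) : ((c : ℂ) • A).PosSemidef := by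
  constructor
  · have h1 := hA.1
    unfold Matrix.IsHermitian at h1 ⊢
    rw [Matrix.conjTranspose_smul, h1]
    norm_num
  · intro x
    exact (hA.smul (a := (c : ℂ)) (by exact_mod_cast hc)).2 x

open Matrix in
lemma traceNorm_outer_sub {d : ℕ} (a b : EuclideanSpace ℂ (Fin d))
    (ha : ‖a‖ = 1) (hb : ‖b‖ = 1) :
    0 ≤ traceNorm (outer a - outer b) ∧ traceNorm (outer a - outer b) ≤ 2 * ‖a - b‖ := by
  set g : ℂ := (inner ℂ a b : ℂ) with hg
  have haa : (inner ℂ a a : ℂ) = 1 := by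
    rw [inner_self_eq_norm_sq_to_K, ha]; norm_num
  have hbb : (inner ℂ b b : ℂ) = 1 := by
    rw [inner_self_eq_norm_sq_to_K, hb]; norm_num
  have hba : (inner ℂ b a : ℂ) = (starRingEnd ℂ) g := by rw [hg, inner_conj_symm]
  set A := outer a - outer b with hA
  have hAH : Aᴴ = A := by
    rw [hA, outer_eq_outerp, outer_eq_outerp, Matrix.conjTranspose_sub,
      outerp_conjTranspose, outerp_conjTranspose]
  have hA2 : Aᴴ * A = outerp a a + outerp b b - g • outerp a b
      - ((starRingEnd ℂ) g) • outerp b a := by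
    rw [hAH, hA, outer_eq_outerp, outer_eq_outerp, Matrix.sub_mul, Matrix.mul_sub,
      Matrix.mul_sub, outerp_mul, outerp_mul, outerp_mul, outerp_mul, haa, hbb, hba, ← hg]
    module
  set r : ℝ := Complex.normSq g with hr
  have hgr : g * (starRingEnd ℂ) g = (r : ℂ) := Complex.mul_conj g
  have hrg : (starRingEnd ℂ) g * g = (r : ℂ) := by rw [mul_comm]; exact hgr
  have hA4 : (Aᴴ * A) * (Aᴴ * A) = ((1 - r : ℝ) : ℂ) • (Aᴴ * A) := by
    rw [hA2]
    simp only [Matrix.add_mul, Matrix.mul_add, Matrix.sub_mul, Matrix.mul_sub,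
      Matrix.smul_mul, Matrix.mul_smul, outerp_mul, haa, hbb, hba, ← hg, smul_smul,
      hgr, hrg]
    push_cast
    module
  have hr1 : r ≤ 1 := by
    have h1 : ‖g‖ ≤ 1 := by
      have := norm_inner_le_norm (𝕜 := ℂ) a b
      rw [ha, hb] at this; simpa [← hg] using this
    have h2 : r = ‖g‖ ^ 2 := by
      rw [hr, Complex.normSq_eq_norm_sq]
    nlinarith [norm_nonneg g]
  have habsq : 1 - r ≤ ‖a - b‖ ^ 2 := by
    have h1 : ‖a - b‖ ^ 2 = 1 - 2 * Complex.re g + 1 := by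
      rw [@norm_sub_sq ℂ, ha, hb, ← hg]; norm_num
    have h2 : Complex.re g ≤ ‖g‖ := Complex.re_le_norm g
    have h3 : ‖g‖ ≤ 1 := by
      have := norm_inner_le_norm (𝕜 := ℂ) a b
      rw [ha, hb] at this; simpa [← hg] using this
    have h4 : r = ‖g‖ ^ 2 := by rw [hr, Complex.normSq_eq_norm_sq]
    nlinarith
  rcases eq_or_lt_of_le hr1 with hcase | hcase
  · -- degenerate: r = 1
    have hAA0 : Aᴴ * A = 0 := by
      have hps : (Aᴴ * A).PosSemidef := Matrix.posSemidef_conjTranspose_mul_self A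
      have hsq0 : (Aᴴ * A) ^ 2 = (0 : Matrix (Fin d) (Fin d) ℂ) := by
        rw [sq, hA4, ← hcase]; norm_num
      have e1 := psd_eq_sqrt_of_sq_eq hps hsq0
      have e2 := psd_eq_sqrt_of_sq_eq (Matrix.PosSemidef.zero (n := Fin d) (R := ℂ))
        (B := 0) (by norm_num)
      rw [e1, ← e2]
    have hTN : traceNorm A = 0 := by
      have := traceNorm_eq_of_sq (A := A) (C := 0) Matrix.PosSemidef.zero
        (by rw [hAA0]; norm_num)
      simpa using this
    constructor
    · rw [hTN]
    · rw [hTN]; positivity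
  · -- nondegenerate
    set s : ℝ := Real.sqrt (1 - r) with hs
    have hspos : 0 < s := Real.sqrt_pos.mpr (by linarith)
    have hss : s * s = 1 - r := Real.mul_self_sqrt (by linarith)
    set C : Matrix (Fin d) (Fin d) ℂ := ((s⁻¹ : ℝ) : ℂ) • (Aᴴ * A) with hC
    have hCps : C.PosSemidef :=
      posSemidef_real_smul (Matrix.posSemidef_conjTranspose_mul_self A)
        (inv_nonneg.mpr hspos.le)
    have hC2 : C ^ 2 = Aᴴ * A := by
      rw [hC, sq, Matrix.smul_mul, Matrix.mul_smul, smul_smul, hA4, smul_smul]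
      have : ((s⁻¹ : ℝ) : ℂ) * ((s⁻¹ : ℝ) : ℂ) * ((1 - r : ℝ) : ℂ) = 1 := by
        rw [← hss]
        push_cast
        field_simp
      rw [this, one_smul]
    have hTN : traceNorm A = 2 * s := by
      rw [traceNorm_eq_of_sq hCps hC2, hC, Matrix.trace_smul, hA2]
      rw [Matrix.trace_sub, Matrix.trace_sub, Matrix.trace_add, Matrix.trace_smul,
        Matrix.trace_smul, outerp_trace, outerp_trace, outerp_trace, outerp_trace,
        haa, hbb, hba, ← hg, smul_eq_mul, smul_eq_mul, hgr]
      simp only [smul_eq_mul]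
      rw [hrg]
      have : ((s⁻¹ : ℝ) : ℂ) * (1 + 1 - (r:ℂ) - (r:ℂ)) = ((s⁻¹ * (2 - 2*r) : ℝ) : ℂ) := by
        push_cast; ring
      rw [this, Complex.ofReal_re]
      field_simp
      nlinarith [hss]
    constructor
    · rw [hTN]; positivity
    · rw [hTN]
      have : s ≤ ‖a - b‖ := by
        rw [hs]
        calc Real.sqrt (1 - r) ≤ Real.sqrt (‖a - b‖ ^ 2) := Real.sqrt_le_sqrt habsq
        _ = ‖a - b‖ := Real.sqrt_sq (norm_nonneg _)
      linarith

lemma normalize_sub_le {E : Type*} [NormedAddCommGroup E] [NormedSpace ℝ E]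
    (u v : E) (hu : u ≠ 0) (hv : v ≠ 0) :
    ‖‖u‖⁻¹ • u - ‖v‖⁻¹ • v‖ ≤ 2 * ‖u - v‖ / ‖u‖ := by
  have hu' : (0:ℝ) < ‖u‖ := norm_pos_iff.mpr hu
  have hv' : (0:ℝ) < ‖v‖ := norm_pos_iff.mpr hv
  have h1 : ‖‖u‖⁻¹ • u - ‖u‖⁻¹ • v‖ = ‖u - v‖ / ‖u‖ := by
    rw [← smul_sub, norm_smul, Real.norm_eq_abs, abs_inv, abs_of_pos hu']
    ring
  have h2 : ‖‖u‖⁻¹ • v - ‖v‖⁻¹ • v‖ ≤ ‖u - v‖ / ‖u‖ := by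
    rw [← sub_smul, norm_smul, Real.norm_eq_abs]
    have heq : ‖u‖⁻¹ - ‖v‖⁻¹ = (‖v‖ - ‖u‖) / (‖u‖ * ‖v‖) := by field_simp
    have : |‖u‖⁻¹ - ‖v‖⁻¹| = |‖v‖ - ‖u‖| / (‖u‖ * ‖v‖) := by
      rw [heq, abs_div, abs_of_pos (by positivity : (0:ℝ) < ‖u‖ * ‖v‖)]
    rw [this]
    have h3 : |‖v‖ - ‖u‖| ≤ ‖u - v‖ := by
      rw [← norm_sub_rev]
      exact abs_norm_sub_norm_le v u
    calc |‖v‖ - ‖u‖| / (‖u‖ * ‖v‖) * ‖v‖ = |‖v‖ - ‖u‖| / ‖u‖ := by field_simp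
    _ ≤ ‖u - v‖ / ‖u‖ := by gcongr
  calc ‖‖u‖⁻¹ • u - ‖v‖⁻¹ • v‖
      ≤ ‖‖u‖⁻¹ • u - ‖u‖⁻¹ • v‖ + ‖‖u‖⁻¹ • v - ‖v‖⁻¹ • v‖ := by
        have := norm_sub_le_norm_sub_add_norm_sub (‖u‖⁻¹ • u) (‖u‖⁻¹ • v) (‖v‖⁻¹ • v)
        exact this
  _ ≤ ‖u - v‖ / ‖u‖ + ‖u - v‖ / ‖u‖ := by rw [h1]; linarith [h2]
  _ = 2 * ‖u - v‖ / ‖u‖ := by ring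

/-- if `Σ_σ π(σ) Σ_ω ‖u_σ^ω − v_σ^ω‖² ≤ δ²` with `δ > 0`, then for any `c > 0`,
`Pr(D ≤ δ^c) ≥ 1 − 4δ^{2(1−c)}` with respect to the distribution `p`. -/
theorem general_robust_prob {S Ω : Type*} [Fintype S] [Fintype Ω] {d : ℕ}
    (π : S → ℝ) (hπ0 : ∀ σ, 0 ≤ π σ) (hπ1 : ∑ σ, π σ = 1)
    (u : S → Ω → EuclideanSpace ℂ (Fin d))
    (hu : ∀ σ, ∑ ω, ‖u σ ω‖ ^ 2 = 1)
    (v : S → Ω → EuclideanSpace ℂ (Fin d))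
    (hv : ∀ x : S × Ω, 0 < probMass π u x → v x.1 x.2 ≠ 0)
    (δ : ℝ) (hδ : 0 < δ)
    (hsum : ∑ σ, π σ * ∑ ω, ‖u σ ω - v σ ω‖ ^ 2 ≤ δ ^ 2)
    (c : ℝ) (hc : 0 < c) :
    1 - 4 * δ ^ (2 * (1 - c)) ≤
      ∑ x : S × Ω, if traceDistRV π u v x ≤ δ ^ c then probMass π u x else 0 := by
  classical
  set p : S × Ω → ℝ := probMass π u with hp
  set D : S × Ω → ℝ := traceDistRV π u v with hD
  have hp0 : ∀ x, 0 ≤ p x := fun x => mul_nonneg (by positivity) (hπ0 _)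
  have hptot : ∑ x : S × Ω, p x = 1 := by
    rw [← hπ1, Fintype.sum_prod_type]
    refine Finset.sum_congr rfl fun σ _ => ?_
    have : ∀ ω : Ω, p (σ, ω) = ‖u σ ω‖ ^ 2 * π σ := fun ω => rfl
    simp_rw [this, ← Finset.sum_mul, hu σ, one_mul]
  have hkey : ∀ x : S × Ω, p x * (D x) ^ 2
      ≤ 4 * (π x.1 * ‖u x.1 x.2 - v x.1 x.2‖ ^ 2) := by
    intro x
    by_cases hx : 0 < probMass π u x
    · have hune : u x.1 x.2 ≠ 0 := by
        intro h
        rw [probMass, h] at hx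
        simp at hx
      have hux : (0:ℝ) < ‖u x.1 x.2‖ := norm_pos_iff.mpr hune
      have hvne := hv x hx
      have hnu : ‖‖u x.1 x.2‖⁻¹ • u x.1 x.2‖ = 1 := norm_smul_inv_norm hune
      have hnv : ‖‖v x.1 x.2‖⁻¹ • v x.1 x.2‖ = 1 := norm_smul_inv_norm hvne
      have hDval : D x = (1/2) * traceNorm (outer (‖u x.1 x.2‖⁻¹ • u x.1 x.2) -
          outer (‖v x.1 x.2‖⁻¹ • v x.1 x.2)) := by
        rw [hD, traceDistRV, if_pos hx]
      obtain ⟨htn0, htnle⟩ := traceNorm_outer_sub _ _ hnu hnv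
      have h2 := normalize_sub_le (u x.1 x.2) (v x.1 x.2) hune hvne
      have hD0 : 0 ≤ D x := by rw [hDval]; linarith
      have hDle : D x ≤ 2 * ‖u x.1 x.2 - v x.1 x.2‖ / ‖u x.1 x.2‖ := by
        rw [hDval]; linarith
      have hDle' : D x * ‖u x.1 x.2‖ ≤ 2 * ‖u x.1 x.2 - v x.1 x.2‖ := by
        rw [← le_div_iff₀ hux]; exact hDle
      have hsq : (D x * ‖u x.1 x.2‖) ^ 2 ≤ (2 * ‖u x.1 x.2 - v x.1 x.2‖) ^ 2 :=
        pow_le_pow_left₀ (by positivity) hDle' 2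
      have hpx : p x = ‖u x.1 x.2‖ ^ 2 * π x.1 := rfl
      have hπx : 0 ≤ π x.1 := hπ0 _
      rw [hpx]
      nlinarith [hsq, sq_nonneg (D x)]
    · have hpz : p x = 0 := le_antisymm (not_lt.1 hx) (hp0 x)
      rw [hpz]
      have : (0:ℝ) ≤ 4 * (π x.1 * ‖u x.1 x.2 - v x.1 x.2‖ ^ 2) := by
        have := hπ0 x.1
        positivity
      linarith
  have hED : ∑ x : S × Ω, p x * (D x) ^ 2 ≤ 4 * δ ^ 2 := by
    calc ∑ x : S × Ω, p x * (D x) ^ 2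
        ≤ ∑ x : S × Ω, 4 * (π x.1 * ‖u x.1 x.2 - v x.1 x.2‖ ^ 2) :=
          Finset.sum_le_sum fun x _ => hkey x
      _ = 4 * ∑ σ, π σ * ∑ ω, ‖u σ ω - v σ ω‖ ^ 2 := by
          rw [← Finset.mul_sum, Fintype.sum_prod_type]
          congr 1
          exact Finset.sum_congr rfl fun σ _ => by rw [Finset.mul_sum]
      _ ≤ 4 * δ ^ 2 := by linarith
  have hδc : (0:ℝ) < δ ^ c := Real.rpow_pos_of_pos hδ c
  have htail : ∑ x : S × Ω, (if ¬ D x ≤ δ ^ c then p x else 0) ≤ 4 * δ ^ (2 * (1 - c)) := by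
    have h1 : ∀ x : S × Ω, (if ¬ D x ≤ δ ^ c then p x else 0)
        ≤ p x * (D x) ^ 2 / (δ ^ c) ^ 2 := by
      intro x
      by_cases h : D x ≤ δ ^ c
      · rw [if_neg (not_not_intro h)]
        have := hp0 x
        positivity
      · rw [if_pos h]
        push_neg at h
        rw [le_div_iff₀ (by positivity)]
        have h2 : (δ ^ c) ^ 2 ≤ (D x) ^ 2 := by nlinarith [h.le, hδc.le]
        nlinarith [hp0 x]
    have h2 : (δ:ℝ) ^ 2 / (δ ^ c) ^ 2 = δ ^ (2 * (1 - c)) := by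
      rw [← Real.rpow_natCast (δ ^ c) 2, ← Real.rpow_natCast δ 2,
        ← Real.rpow_mul hδ.le, ← Real.rpow_sub hδ]
      norm_num
      ring_nf
    calc ∑ x : S × Ω, (if ¬ D x ≤ δ ^ c then p x else 0)
        ≤ ∑ x : S × Ω, p x * (D x) ^ 2 / (δ ^ c) ^ 2 := Finset.sum_le_sum fun x _ => h1 x
      _ = (∑ x : S × Ω, p x * (D x) ^ 2) / (δ ^ c) ^ 2 := by rw [Finset.sum_div]
      _ ≤ (4 * δ ^ 2) / (δ ^ c) ^ 2 := by gcongr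
      _ = 4 * δ ^ (2 * (1 - c)) := by rw [mul_div_assoc, h2]
  have hsplit : ∑ x : S × Ω, (if D x ≤ δ ^ c then p x else 0)
      = 1 - ∑ x : S × Ω, (if ¬ D x ≤ δ ^ c then p x else 0) := by
    rw [← hptot, ← Finset.sum_sub_distrib]
    refine Finset.sum_congr rfl fun x _ => ?_
    split_ifs with h <;> simp
  rw [hsplit]
  linarith
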